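/- (Zhang et al. criterion, θ = π case) For every separable state ρ on H = H_A ⊗ H_B with marginals ρ_A = tr_B(ρ) and ρ_B = tr_A(ρ): ‖ρ + ρ_A ⊗ ρ_B‖_CCN ≤ √[ (1 + tr(ρ_A²)) (1 + tr(ρ_B²)) ]. -/

import Mathlib

open scoped Kronecker ComplexOrder
open Matrix Finset

/-- Hilbert-Schmidt inner product on matrices. -/
noncomputable def hsInner {n : Type*} [Fintype n] (A B : Matrix n n ℂ) : ℂ :=
  (Aᴴ * B).trace

/-- Hilbert-Schmidt norm. -/
noncomputable def hsNorm {n : Type*} [Fintype n] (A : Matrix n n ℂ) : ℝ :=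
  Real.sqrt (hsInner A A).re

/-- A density operator: positive semidefinite with unit trace. -/
def IsDensity {n : Type*} [Fintype n] (ρ : Matrix n n ℂ) : Prop :=
  ρ.PosSemidef ∧ ρ.trace = 1

lemma hsInner_self_re {n : Type*} [Fintype n] (A : Matrix n n ℂ) :
    (hsInner A A).re = ∑ i, ∑ j, Complex.normSq (A j i) := by
  simp only [hsInner, Matrix.trace, Matrix.diag, Matrix.mul_apply, Matrix.conjTranspose_apply]
  rw [Complex.re_sum]
  refine Finset.sum_congr rfl fun i _ => ?_
  rw [Complex.re_sum]
  refine Finset.sum_congr rfl fun j _ => ?_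
  simp [RCLike.star_def, Complex.conj_mul', ← Complex.ofReal_pow, Complex.sq_norm]

lemma hsInner_self_re_nonneg {n : Type*} [Fintype n] (A : Matrix n n ℂ) :
    0 ≤ (hsInner A A).re := by
  rw [hsInner_self_re]
  exact Finset.sum_nonneg fun i _ => Finset.sum_nonneg fun j _ => Complex.normSq_nonneg _

lemma hsNorm_nonneg {n : Type*} [Fintype n] (A : Matrix n n ℂ) : 0 ≤ hsNorm A :=
  Real.sqrt_nonneg _

lemma hsNorm_sq {n : Type*} [Fintype n] (A : Matrix n n ℂ) :
    hsNorm A ^ 2 = (hsInner A A).re :=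
  Real.sq_sqrt (hsInner_self_re_nonneg A)

lemma hsNorm_smul {n : Type*} [Fintype n] (c : ℝ) (A : Matrix n n ℂ) :
    hsNorm ((c : ℂ) • A) = |c| * hsNorm A := by
  have : hsInner ((c : ℂ) • A) ((c : ℂ) • A) = ((c^2 : ℝ) : ℂ) * hsInner A A := by
    simp only [hsInner, Matrix.conjTranspose_smul, Matrix.smul_mul, Matrix.mul_smul,
      Matrix.trace_smul, smul_smul, smul_eq_mul]
    rw [RCLike.star_def, Complex.conj_ofReal]
    push_cast
    ring
  rw [hsNorm, this]
  simp only [Complex.mul_re, Complex.ofReal_re, Complex.ofReal_im, zero_mul, sub_zero]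
  rw [Real.sqrt_mul (by positivity), Real.sqrt_sq_eq_abs]
  rfl

/-- For a positive semidefinite matrix of unit trace, the trace of the square is at most one. -/
lemma trace_sq_le_one {n : Type*} [Fintype n] [DecidableEq n] {ρ : Matrix n n ℂ}
    (h : IsDensity ρ) : (ρ * ρ).trace.re ≤ 1 := by
  have hH : ρ.IsHermitian := h.1.1
  set U : Matrix n n ℂ := (Matrix.IsHermitian.eigenvectorUnitary hH : Matrix n n ℂ) with hUdef
  set D : Matrix n n ℂ := Matrix.diagonal (RCLike.ofReal ∘ hH.eigenvalues) with hDdef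
  have hUU : star U * U = 1 :=
    Matrix.mem_unitaryGroup_iff'.mp (Matrix.IsHermitian.eigenvectorUnitary hH).2
  have hspec : ρ = U * D * star U := hH.spectral_theorem
  have htr : ρ.trace = D.trace := by
    rw [hspec, Matrix.trace_mul_cycle, hUU, Matrix.one_mul]
  have htr2 : (ρ * ρ).trace = (D * D).trace := by
    rw [hspec]
    simp only [Matrix.mul_assoc]
    rw [← Matrix.mul_assoc (star U) U, hUU, Matrix.one_mul, Matrix.trace_mul_comm]
    simp only [Matrix.mul_assoc]
    rw [hUU, Matrix.mul_one]
  have hsum : ∑ i, hH.eigenvalues i = 1 := by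
    have := h.2
    rw [htr] at this
    have : (D.trace).re = 1 := by rw [this]; simp
    rw [hDdef, Matrix.trace_diagonal, Complex.re_sum] at this
    simpa using this
  have hsq : (ρ * ρ).trace.re = ∑ i, hH.eigenvalues i ^ 2 := by
    rw [htr2, hDdef, Matrix.diagonal_mul_diagonal, Matrix.trace_diagonal, Complex.re_sum]
    refine Finset.sum_congr rfl fun i _ => ?_
    simp [sq]
  rw [hsq]
  calc ∑ i, hH.eigenvalues i ^ 2 ≤ (∑ i, hH.eigenvalues i) ^ 2 :=
        Finset.sum_sq_le_sq_sum_of_nonneg fun i _ => h.1.eigenvalues_nonneg i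
    _ = 1 := by rw [hsum]; norm_num

lemma hsNorm_le_one_of_density {n : Type*} [Fintype n] [DecidableEq n] {ρ : Matrix n n ℂ}
    (h : IsDensity ρ) : hsNorm ρ ≤ 1 := by
  have hH : ρᴴ = ρ := h.1.1
  rw [hsNorm, hsInner, hH]
  calc Real.sqrt (ρ * ρ).trace.re ≤ Real.sqrt 1 :=
        Real.sqrt_le_sqrt (trace_sq_le_one h)
    _ = 1 := Real.sqrt_one

/-- A separable bipartite state: a convex combination of product density operators. -/
def IsSeparableState {NA NB : ℕ} (ρ : Matrix (Fin NA × Fin NB) (Fin NA × Fin NB) ℂ) : Prop :=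
  ∃ (m : ℕ) (p : Fin m → ℝ)
    (ρA : Fin m → Matrix (Fin NA) (Fin NA) ℂ) (ρB : Fin m → Matrix (Fin NB) (Fin NB) ℂ),
    (∀ i, 0 < p i) ∧ (∑ i, p i = 1) ∧ (∀ i, IsDensity (ρA i)) ∧ (∀ i, IsDensity (ρB i)) ∧
    ρ = ∑ i, (p i : ℂ) • (ρA i ⊗ₖ ρB i)

/-- The computable cross norm (CCN) on bipartite operators. -/
noncomputable def ccn {NA NB : ℕ} (C : Matrix (Fin NA × Fin NB) (Fin NA × Fin NB) ℂ) : ℝ :=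
  sInf { r : ℝ | ∃ (n : ℕ) (A : Fin n → Matrix (Fin NA) (Fin NA) ℂ)
    (B : Fin n → Matrix (Fin NB) (Fin NB) ℂ),
    C = ∑ k, A k ⊗ₖ B k ∧ r = ∑ k, hsNorm (A k) * hsNorm (B k) }

/-- The marginal (reduced density operator) of a bipartite operator on the A-side. -/
noncomputable def margA {NA NB : ℕ} (ρ : Matrix (Fin NA × Fin NB) (Fin NA × Fin NB) ℂ) :
    Matrix (Fin NA) (Fin NA) ℂ :=
  Matrix.of fun i i' => ∑ b : Fin NB, ρ (i, b) (i', b)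

/-- The marginal (reduced density operator) of a bipartite operator on the B-side. -/
noncomputable def margB {NA NB : ℕ} (ρ : Matrix (Fin NA × Fin NB) (Fin NA × Fin NB) ℂ) :
    Matrix (Fin NB) (Fin NB) ℂ :=
  Matrix.of fun b b' => ∑ i : Fin NA, ρ (i, b) (i, b')

lemma margA_sum {NA NB m : ℕ} (p : Fin m → ℝ)
    (ρA : Fin m → Matrix (Fin NA) (Fin NA) ℂ) (ρB : Fin m → Matrix (Fin NB) (Fin NB) ℂ)
    (hB : ∀ i, (ρB i).trace = 1) :
    margA (∑ i, (p i : ℂ) • (ρA i ⊗ₖ ρB i)) = ∑ i, (p i : ℂ) • ρA i := by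
  ext i i'
  simp only [margA, Matrix.of_apply, Matrix.sum_apply, Matrix.smul_apply,
    Matrix.kroneckerMap_apply, smul_eq_mul]
  rw [Finset.sum_comm]
  refine Finset.sum_congr rfl fun k _ => ?_
  have hb : ∑ b : Fin NB, ρB k b b = 1 := by
    simpa [Matrix.trace, Matrix.diag] using hB k
  calc ∑ b : Fin NB, (p k : ℂ) * (ρA k i i' * ρB k b b)
      = (p k : ℂ) * ρA k i i' * ∑ b : Fin NB, ρB k b b := by
        rw [Finset.mul_sum]; exact Finset.sum_congr rfl fun _ _ => by ring
    _ = (p k : ℂ) * ρA k i i' := by rw [hb, mul_one]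

lemma margB_sum {NA NB m : ℕ} (p : Fin m → ℝ)
    (ρA : Fin m → Matrix (Fin NA) (Fin NA) ℂ) (ρB : Fin m → Matrix (Fin NB) (Fin NB) ℂ)
    (hA : ∀ i, (ρA i).trace = 1) :
    margB (∑ i, (p i : ℂ) • (ρA i ⊗ₖ ρB i)) = ∑ i, (p i : ℂ) • ρB i := by
  ext b b'
  simp only [margB, Matrix.of_apply, Matrix.sum_apply, Matrix.smul_apply,
    Matrix.kroneckerMap_apply, smul_eq_mul]
  rw [Finset.sum_comm]
  refine Finset.sum_congr rfl fun k _ => ?_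
  have ha : ∑ i : Fin NA, ρA k i i = 1 := by
    simpa [Matrix.trace, Matrix.diag] using hA k
  calc ∑ i : Fin NA, (p k : ℂ) * (ρA k i i * ρB k b b')
      = (p k : ℂ) * ρB k b b' * ∑ i : Fin NA, ρA k i i := by
        rw [Finset.mul_sum]; exact Finset.sum_congr rfl fun _ _ => by ring
    _ = (p k : ℂ) * ρB k b b' := by rw [ha, mul_one]

/-- The Zhang et al. separability criterion (the θ = π case): for every separable state ρ,
‖ρ + ρ_A ⊗ ρ_B‖_CCN ≤ √((1 + tr ρ_A²)(1 + tr ρ_B²)). -/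
theorem stmt17_zhang_criterion {NA NB : ℕ} (hA : 2 ≤ NA) (hB : 2 ≤ NB)
    (ρ : Matrix (Fin NA × Fin NB) (Fin NA × Fin NB) ℂ)
    (hsep : IsSeparableState ρ) :
    ccn (ρ + margA ρ ⊗ₖ margB ρ)
      ≤ Real.sqrt ((1 + (margA ρ * margA ρ).trace.re)
          * (1 + (margB ρ * margB ρ).trace.re)) := by
  obtain ⟨m, p, ρA, ρB, hp, hps, hDA, hDB, hρ⟩ := hsep
  have hmargA : margA ρ = ∑ i, (p i : ℂ) • ρA i := by
    rw [hρ]; exact margA_sum p ρA ρB fun i => (hDB i).2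
  have hmargB : margB ρ = ∑ i, (p i : ℂ) • ρB i := by
    rw [hρ]; exact margB_sum p ρA ρB fun i => (hDA i).2
  -- Hermiticity of the marginals
  have hermA : (margA ρ)ᴴ = margA ρ := by
    rw [hmargA]
    simp only [Matrix.conjTranspose_sum, Matrix.conjTranspose_smul]
    refine Finset.sum_congr rfl fun i _ => ?_
    rw [(hDA i).1.1]
    simp
  have hermB : (margB ρ)ᴴ = margB ρ := by
    rw [hmargB]
    simp only [Matrix.conjTranspose_sum, Matrix.conjTranspose_smul]
    refine Finset.sum_congr rfl fun i _ => ?_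
    rw [(hDB i).1.1]
    simp
  set x := hsNorm (margA ρ) with hx
  set y := hsNorm (margB ρ) with hy
  have hxA : (margA ρ * margA ρ).trace.re = x ^ 2 := by
    rw [hx, hsNorm_sq, hsInner, hermA]
  have hyB : (margB ρ * margB ρ).trace.re = y ^ 2 := by
    rw [hy, hsNorm_sq, hsInner, hermB]
  -- the decomposition witnessing the CCN bound
  set A : Fin (m + 1) → Matrix (Fin NA) (Fin NA) ℂ :=
    Fin.snoc (fun k => (p k : ℂ) • ρA k) (margA ρ) with hAdef
  set B : Fin (m + 1) → Matrix (Fin NB) (Fin NB) ℂ :=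
    Fin.snoc ρB (margB ρ) with hBdef
  have hdecomp : ρ + margA ρ ⊗ₖ margB ρ = ∑ k, A k ⊗ₖ B k := by
    rw [Fin.sum_univ_castSucc]
    simp only [hAdef, hBdef, Fin.snoc_castSucc, Fin.snoc_last]
    rw [hρ]
    congr 1
    refine Finset.sum_congr rfl fun k _ => ?_
    rw [Matrix.smul_kronecker]
  have hmem : (∑ k, hsNorm (A k) * hsNorm (B k)) ∈
      { r : ℝ | ∃ (n : ℕ) (A : Fin n → Matrix (Fin NA) (Fin NA) ℂ)
        (B : Fin n → Matrix (Fin NB) (Fin NB) ℂ),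
        ρ + margA ρ ⊗ₖ margB ρ = ∑ k, A k ⊗ₖ B k ∧
        r = ∑ k, hsNorm (A k) * hsNorm (B k) } :=
    ⟨m + 1, A, B, hdecomp, rfl⟩
  have hbdd : BddBelow { r : ℝ | ∃ (n : ℕ) (A : Fin n → Matrix (Fin NA) (Fin NA) ℂ)
      (B : Fin n → Matrix (Fin NB) (Fin NB) ℂ),
      ρ + margA ρ ⊗ₖ margB ρ = ∑ k, A k ⊗ₖ B k ∧
      r = ∑ k, hsNorm (A k) * hsNorm (B k) } := by
    refine ⟨0, fun r hr => ?_⟩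
    obtain ⟨n, A', B', _, hr⟩ := hr
    rw [hr]
    exact Finset.sum_nonneg fun k _ => mul_nonneg (hsNorm_nonneg _) (hsNorm_nonneg _)
  have hle : ccn (ρ + margA ρ ⊗ₖ margB ρ) ≤ ∑ k, hsNorm (A k) * hsNorm (B k) :=
    csInf_le hbdd hmem
  -- bound the sum
  have hsum_le : (∑ k, hsNorm (A k) * hsNorm (B k)) ≤ 1 + x * y := by
    rw [Fin.sum_univ_castSucc]
    simp only [hAdef, hBdef, Fin.snoc_castSucc, Fin.snoc_last]
    have h1 : (∑ k : Fin m, hsNorm ((p k : ℂ) • ρA k) * hsNorm (ρB k)) ≤ 1 := by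
      calc (∑ k : Fin m, hsNorm ((p k : ℂ) • ρA k) * hsNorm (ρB k))
          ≤ ∑ k : Fin m, p k := by
            refine Finset.sum_le_sum fun k _ => ?_
            rw [hsNorm_smul, abs_of_pos (hp k)]
            calc p k * hsNorm (ρA k) * hsNorm (ρB k)
                ≤ p k * 1 * 1 := by
                  apply mul_le_mul
                  · exact mul_le_mul_of_nonneg_left (hsNorm_le_one_of_density (hDA k))
                      (le_of_lt (hp k))
                  · exact hsNorm_le_one_of_density (hDB k)
                  · exact hsNorm_nonneg _
                  · nlinarith [hp k]
              _ = p k := by ring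
        _ = 1 := hps
    linarith [h1]
  have hxy : 1 + x * y ≤ Real.sqrt ((1 + x ^ 2) * (1 + y ^ 2)) := by
    have hx0 : 0 ≤ x := hsNorm_nonneg _
    have hy0 : 0 ≤ y := hsNorm_nonneg _
    rw [show (1 + x * y) = Real.sqrt ((1 + x * y) ^ 2) from
      (Real.sqrt_sq (by nlinarith)).symm]
    apply Real.sqrt_le_sqrt
    nlinarith [sq_nonneg (x - y)]
  rw [hxA, hyB]
  calc ccn (ρ + margA ρ ⊗ₖ margB ρ) ≤ ∑ k, hsNorm (A k) * hsNorm (B k) := hle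
    _ ≤ 1 + x * y := hsum_le
    _ ≤ Real.sqrt ((1 + x ^ 2) * (1 + y ^ 2)) := hxy
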